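/- Lemma (spectrum of reduced density operators): with the setup of the general formalism, let {1,…,m} = A ⊔ B be a partition of the parties such that 𝒢_Φ(B) ⊆ 𝒢_Φ(A), and let ρ_A be the reduced density operator of Ψ on H_A = ⊗_{k∈A} H_k (the partial trace of the rank-one projection onto Ψ over H_B = ⊗_{k∈B} H_k). Then ρ_A² = ( |𝒢_Φ(A)|·|𝒢_Φ(B)| / (|𝒢|·|𝒢_Φ|) ) · ρ_A; in particular the spectrum of ρ_A is flat, i.e. every nonzero eigenvalue of ρ_A equals |𝒢_Φ(A)|·|𝒢_Φ(B)| / (|𝒢|·|𝒢_Φ|). -/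

import Mathlib

open scoped BigOperators
open scoped Classical

noncomputable section

namespace GenForm

variable {G : Type} [Group G] [Fintype G] {n m : ℕ}
  {ι : Fin m → Type} [∀ k, Fintype (ι k)] [∀ k, DecidableEq (ι k)]

/-- `O` assigns to every party `k` a unitary representation of 𝒢 = G^{×n} on the
(concretely modelled) finite-dimensional Hilbert space H_k = (ι k → ℂ). -/
def IsLocalRep (O : (k : Fin m) → (Fin n → G) → Matrix (ι k) (ι k) ℂ) : Prop :=
  ∀ k : Fin m,
    (∀ t, O k t ∈ Matrix.unitaryGroup (ι k) ℂ) ∧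
    O k 1 = 1 ∧
    ∀ t u, O k (t * u) = O k t * O k u

/-- The product vector Φ = φ₁ ⊗ ⋯ ⊗ φ_m, as an amplitude function. -/
def prodVec (φ : (k : Fin m) → ι k → ℂ) : ((k : Fin m) → ι k) → ℂ :=
  fun x => ∏ k, φ k (x k)

/-- The vector O^t Φ = ⊗_k O_k^t φ_k. -/
def actVec (O : (k : Fin m) → (Fin n → G) → Matrix (ι k) (ι k) ℂ)
    (φ : (k : Fin m) → ι k → ℂ) (t : Fin n → G) : ((k : Fin m) → ι k) → ℂ :=
  fun x => ∏ k, ((O k t).mulVec (φ k)) (x k)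

/-- The vector O_X^t Φ, where the truncated operator acts as O_k^t for k ∈ X and as
the identity elsewhere. -/
def actVecOn (O : (k : Fin m) → (Fin n → G) → Matrix (ι k) (ι k) ℂ)
    (φ : (k : Fin m) → ι k → ℂ) (X : Finset (Fin m)) (t : Fin n → G) :
    ((k : Fin m) → ι k) → ℂ :=
  fun x => ∏ k, if k ∈ X then ((O k t).mulVec (φ k)) (x k) else φ k (x k)

/-- Each local vector O_k^t φ_k and O_k^u φ_k is either equal or orthogonal. -/
def OrthCond (O : (k : Fin m) → (Fin n → G) → Matrix (ι k) (ι k) ℂ)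
    (φ : (k : Fin m) → ι k → ℂ) : Prop :=
  ∀ (k : Fin m) (t u : Fin n → G),
    (O k t).mulVec (φ k) = (O k u).mulVec (φ k) ∨
    ∑ x : ι k, (starRingEnd ℂ) (((O k t).mulVec (φ k)) x) * ((O k u).mulVec (φ k)) x = 0

/-- The global stabiliser 𝒢_Φ = { t : O^t Φ = Φ }. -/
def globalStab (O : (k : Fin m) → (Fin n → G) → Matrix (ι k) (ι k) ℂ)
    (φ : (k : Fin m) → ι k → ℂ) : Set (Fin n → G) :=
  { t | actVec O φ t = prodVec φ }

/-- The local stabiliser 𝒢_Φ(X) = { t : O_X^t Φ = Φ }. -/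
def localStab (O : (k : Fin m) → (Fin n → G) → Matrix (ι k) (ι k) ℂ)
    (φ : (k : Fin m) → ι k → ℂ) (X : Finset (Fin m)) : Set (Fin n → G) :=
  { t | actVecOn O φ X t = prodVec φ }

/-- The symmetrized state Ψ = (|𝒢|·|𝒢_Φ|)^{-1/2} ∑_{t∈𝒢} O^t Φ. -/
def Psi (O : (k : Fin m) → (Fin n → G) → Matrix (ι k) (ι k) ℂ)
    (φ : (k : Fin m) → ι k → ℂ) : ((k : Fin m) → ι k) → ℂ :=
  fun x => (((Real.sqrt ((Fintype.card G) ^ n * Nat.card (globalStab O φ)))⁻¹ : ℝ) : ℂ) *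
    ∑ t : Fin n → G, actVec O φ t x

/-- A product state of the m parties. -/
def IsProd (Φ : ((k : Fin m) → ι k) → ℂ) : Prop :=
  ∃ χ : (k : Fin m) → ι k → ℂ,
    (∀ k, ∑ x : ι k, ‖χ k x‖ ^ 2 = 1) ∧
    ∀ x, Φ x = ∏ k, χ k (x k)

/-- Maximal overlap with product states of the parties. -/
def LMax (ψ : ((k : Fin m) → ι k) → ℂ) : ℝ :=
  sSup { r : ℝ | ∃ Φ, IsProd Φ ∧
    r = ‖∑ x : (k : Fin m) → ι k, (starRingEnd ℂ) (Φ x) * ψ x‖ }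

/-- Geometric entanglement. -/
def EG (ψ : ((k : Fin m) → ι k) → ℂ) : ℝ :=
  - Real.logb 2 (LMax ψ ^ 2)

end GenForm

namespace GenForm

variable {G : Type} [Group G] [Fintype G] {n m : ℕ}
  {ι : Fin m → Type} [∀ k, Fintype (ι k)] [∀ k, DecidableEq (ι k)]

/-- Glue a configuration on the parties in `A` with one on the parties outside `A`. -/
def glue (A : Finset (Fin m)) (xA : (k : { k : Fin m // k ∈ A }) → ι k.1)
    (zB : (k : { k : Fin m // k ∉ A }) → ι k.1) : (k : Fin m) → ι k :=
  fun k => if h : k ∈ A then xA ⟨k, h⟩ else zB ⟨k, h⟩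

/-- The reduced density operator of a state ψ on the parties in `A`: the partial trace
of the rank-one projection |ψ⟩⟨ψ| over the parties outside `A`. -/
def rhoA (ψ : ((k : Fin m) → ι k) → ℂ) (A : Finset (Fin m)) :
    Matrix ((k : { k : Fin m // k ∈ A }) → ι k.1)
      ((k : { k : Fin m // k ∈ A }) → ι k.1) ℂ :=
  Matrix.of fun xA yA =>
    ∑ zB : (k : { k : Fin m // k ∉ A }) → ι k.1,
      ψ (glue A xA zB) * (starRingEnd ℂ) (ψ (glue A yA zB))


section Aux

open Matrix

variable (O : (k : Fin m) → (Fin n → G) → Matrix (ι k) (ι k) ℂ)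
  (φ : (k : Fin m) → ι k → ℂ)

lemma norm_one (hφ : ∀ k, ∑ x : ι k, ‖φ k x‖ ^ 2 = 1) (k : Fin m) :
    ∑ x : ι k, (starRingEnd ℂ) (φ k x) * φ k x = 1 := by
  have h : ∀ x : ι k, (starRingEnd ℂ) (φ k x) * φ k x
      = ((‖φ k x‖ ^ 2 : ℝ) : ℂ) := by
    intro x
    rw [mul_comm, Complex.mul_conj, Complex.normSq_eq_norm_sq]
  rw [Finset.sum_congr rfl (fun x _ => h x), ← Complex.ofReal_sum, hφ k,
    Complex.ofReal_one]

lemma oneK (hO : IsLocalRep O) (k : Fin m) : (O k 1).mulVec (φ k) = φ k := by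
  rw [(hO k).2.1, Matrix.one_mulVec]

lemma homK (hO : IsLocalRep O) (k : Fin m) (t u : Fin n → G) :
    (O k t).mulVec ((O k u).mulVec (φ k)) = (O k (t * u)).mulVec (φ k) := by
  rw [(hO k).2.2, Matrix.mulVec_mulVec]

lemma eq_iff (hO : IsLocalRep O) (k : Fin m) (t u : Fin n → G) :
    (O k t).mulVec (φ k) = (O k u).mulVec (φ k) ↔
      (O k (u⁻¹ * t)).mulVec (φ k) = φ k := by
  constructor
  · intro h
    have h2 := congrArg (fun v => (O k u⁻¹).mulVec v) h
    rw [homK O φ hO, homK O φ hO, inv_mul_cancel] at h2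
    rw [h2, oneK O φ hO]
  · intro h
    have h2 := congrArg (fun v => (O k u).mulVec v) h
    rw [homK O φ hO] at h2
    rw [← mul_assoc, mul_inv_cancel, one_mul] at h2
    exact h2

lemma unit_norm (hO : IsLocalRep O)
    (hφ : ∀ k, ∑ x : ι k, ‖φ k x‖ ^ 2 = 1)
    (k : Fin m) (t : Fin n → G) :
    ∑ x : ι k, (starRingEnd ℂ) (((O k t).mulVec (φ k)) x) * ((O k t).mulVec (φ k)) x
      = 1 := by
  have hu : (O k t).conjTranspose * (O k t) = 1 := by
    have := Matrix.mem_unitaryGroup_iff'.mp ((hO k).1 t)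
    rwa [Matrix.star_eq_conjTranspose] at this
  have hdot : ∀ (v w : ι k → ℂ), star v ⬝ᵥ w = ∑ x, (starRingEnd ℂ) (v x) * w x := by
    intro v w; rfl
  rw [← hdot]
  rw [Matrix.star_mulVec, Matrix.dotProduct_mulVec, Matrix.vecMul_vecMul, hu,
    Matrix.vecMul_one, hdot]
  exact norm_one φ hφ k

lemma inner_eq (hO : IsLocalRep O)
    (hφ : ∀ k, ∑ x : ι k, ‖φ k x‖ ^ 2 = 1)
    (horth : OrthCond O φ) (k : Fin m) (t u : Fin n → G) :
    ∑ x : ι k, (starRingEnd ℂ) (((O k u).mulVec (φ k)) x) * ((O k t).mulVec (φ k)) x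
      = if (O k (u⁻¹ * t)).mulVec (φ k) = φ k then 1 else 0 := by
  by_cases h : (O k (u⁻¹ * t)).mulVec (φ k) = φ k
  · rw [if_pos h]
    have he : (O k t).mulVec (φ k) = (O k u).mulVec (φ k) :=
      (eq_iff O φ hO k t u).mpr h
    rw [he]
    exact unit_norm O φ hO hφ k u
  · rw [if_neg h]
    rcases horth k t u with he | hz
    · exact absurd ((eq_iff O φ hO k t u).mp he) h
    · have h2 := congrArg (starRingEnd ℂ) hz
      simp only [map_sum, _root_.map_mul, Complex.conj_conj, map_zero] at h2
      rw [← h2]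
      exact Finset.sum_congr rfl fun x _ => by ring

lemma stab_iff (hO : IsLocalRep O)
    (hφ : ∀ k, ∑ x : ι k, ‖φ k x‖ ^ 2 = 1)
    (horth : OrthCond O φ) (X : Finset (Fin m)) (t : Fin n → G) :
    t ∈ localStab O φ X ↔ ∀ k ∈ X, (O k t).mulVec (φ k) = φ k := by
  constructor
  · intro h
    have hh : actVecOn O φ X t = prodVec φ := h
    set g : (k : Fin m) → ι k → ℂ := fun k y =>
      (starRingEnd ℂ) (φ k y) *
        (if k ∈ X then ((O k t).mulVec (φ k)) y else φ k y) with hg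
    have hterm : ∀ x : (k : Fin m) → ι k,
        (starRingEnd ℂ) (prodVec φ x) * actVecOn O φ X t x = ∏ k, g k (x k) := by
      intro x
      rw [hg]
      simp only [prodVec, actVecOn, map_prod]
      rw [← Finset.prod_mul_distrib]
    have hsum : ∑ x : (k : Fin m) → ι k,
        (starRingEnd ℂ) (prodVec φ x) * actVecOn O φ X t x
        = ∏ k, ∑ y : ι k, g k y := by
      rw [Finset.sum_congr rfl fun x _ => hterm x]
      exact (Fintype.prod_sum g).symm
    have hone : ∑ x : (k : Fin m) → ι k,
        (starRingEnd ℂ) (prodVec φ x) * actVecOn O φ X t x = 1 := by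
      rw [hh]
      have h2 : ∀ x : (k : Fin m) → ι k,
          (starRingEnd ℂ) (prodVec φ x) * prodVec φ x
            = ∏ k, (fun k y => (starRingEnd ℂ) (φ k y) * φ k y) k (x k) := by
        intro x
        simp only [prodVec, map_prod]
        rw [← Finset.prod_mul_distrib]
      rw [Finset.sum_congr rfl fun x _ => h2 x,
        ← Fintype.prod_sum (fun k y => (starRingEnd ℂ) (φ k y) * φ k y)]
      exact Finset.prod_eq_one fun k _ => norm_one φ hφ k
    rw [hone] at hsum
    intro k hk
    have hne : (∑ y : ι k, g k y) ≠ 0 := by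
      intro h0
      rw [Finset.prod_eq_zero (Finset.mem_univ k) h0] at hsum
      exact one_ne_zero hsum
    have hval : ∑ y : ι k, g k y
        = if (O k t).mulVec (φ k) = φ k then 1 else 0 := by
      rw [hg]
      simp only [if_pos hk]
      have h3 := inner_eq O φ hO hφ horth k t 1
      rw [inv_one, one_mul] at h3
      rw [← h3]
      exact Finset.sum_congr rfl fun y _ => by rw [oneK O φ hO]
    rw [hval] at hne
    by_contra hc
    rw [if_neg hc] at hne
    exact hne rfl
  · intro h
    show actVecOn O φ X t = prodVec φ
    funext x
    simp only [actVecOn, prodVec]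
    refine Finset.prod_congr rfl fun k _ => ?_
    by_cases hk : k ∈ X
    · rw [if_pos hk, h k hk]
    · rw [if_neg hk]

end Aux


section Aux2

open Matrix

variable (O : (k : Fin m) → (Fin n → G) → Matrix (ι k) (ι k) ℂ)
  (φ : (k : Fin m) → ι k → ℂ)

/-- Local product amplitude over the parties satisfying `P`. -/
def fOn (P : Fin m → Prop) (t : Fin n → G)
    (x : (k : { k : Fin m // P k }) → ι k.1) : ℂ :=
  ∏ k : { k : Fin m // P k }, ((O k.1 t).mulVec (φ k.1)) (x k)

lemma stab_symm (hO : IsLocalRep O)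
    (hφ : ∀ k, ∑ x : ι k, ‖φ k x‖ ^ 2 = 1)
    (horth : OrthCond O φ) (X : Finset (Fin m)) (t u : Fin n → G) :
    (u⁻¹ * t) ∈ localStab O φ X ↔ (t⁻¹ * u) ∈ localStab O φ X := by
  rw [stab_iff O φ hO hφ horth, stab_iff O φ hO hφ horth]
  constructor <;> intro h k hk
  · exact (eq_iff O φ hO k u t).mp ((eq_iff O φ hO k t u).mpr (h k hk)).symm
  · exact (eq_iff O φ hO k t u).mp ((eq_iff O φ hO k u t).mpr (h k hk)).symm

lemma fOn_inv (hO : IsLocalRep O)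
    (hφ : ∀ k, ∑ x : ι k, ‖φ k x‖ ^ 2 = 1)
    (horth : OrthCond O φ) (P : Fin m → Prop) (X : Finset (Fin m))
    (hPX : ∀ k, P k → k ∈ X) (t u : Fin n → G)
    (h : (u⁻¹ * t) ∈ localStab O φ X) :
    fOn O φ P t = fOn O φ P u := by
  funext x
  refine Finset.prod_congr rfl fun k _ => ?_
  rw [(eq_iff O φ hO k.1 t u).mpr
    ((stab_iff O φ hO hφ horth X _).mp h k.1 (hPX k.1 k.2))]

lemma fOn_overlap (hO : IsLocalRep O)
    (hφ : ∀ k, ∑ x : ι k, ‖φ k x‖ ^ 2 = 1)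
    (horth : OrthCond O φ) (P : Fin m → Prop) (X : Finset (Fin m))
    (hPX : ∀ k, P k ↔ k ∈ X) (t u : Fin n → G) :
    ∑ z : (k : { k : Fin m // P k }) → ι k.1,
        fOn O φ P t z * (starRingEnd ℂ) (fOn O φ P u z)
      = if (u⁻¹ * t) ∈ localStab O φ X then 1 else 0 := by
  set F : (k : { k : Fin m // P k }) → ι k.1 → ℂ := fun k y =>
    ((O k.1 t).mulVec (φ k.1)) y *
      (starRingEnd ℂ) (((O k.1 u).mulVec (φ k.1)) y) with hF
  have hterm : ∀ z : (k : { k : Fin m // P k }) → ι k.1,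
      fOn O φ P t z * (starRingEnd ℂ) (fOn O φ P u z)
        = ∏ k : { k : Fin m // P k }, F k (z k) := by
    intro z
    simp only [fOn, map_prod, hF]
    rw [← Finset.prod_mul_distrib]
  rw [Finset.sum_congr rfl fun z _ => hterm z, ← Fintype.prod_sum F]
  have hfac : ∀ k : { k : Fin m // P k },
      (∑ y : ι k.1, F k y)
        = if (O k.1 (u⁻¹ * t)).mulVec (φ k.1) = φ k.1 then 1 else 0 := by
    intro k
    rw [← inner_eq O φ hO hφ horth k.1 t u, hF]
    exact Finset.sum_congr rfl fun y _ => mul_comm _ _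
  rw [Finset.prod_congr rfl fun k _ => hfac k]
  by_cases hm : (u⁻¹ * t) ∈ localStab O φ X
  · rw [if_pos hm]
    have hall := (stab_iff O φ hO hφ horth X _).mp hm
    exact Finset.prod_eq_one fun k _ => by
      rw [if_pos (hall k.1 ((hPX k.1).mp k.2))]
  · rw [if_neg hm]
    have hm' := hm
    rw [stab_iff O φ hO hφ horth] at hm'
    push_neg at hm'
    obtain ⟨k0, hk0X, hk0⟩ := hm'
    exact Finset.prod_eq_zero
      (Finset.mem_univ (⟨k0, (hPX k0).mpr hk0X⟩ : { k : Fin m // P k }))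
      (by rw [if_neg hk0])

lemma count_stab (S : Set (Fin n → G)) (u : Fin n → G) :
    (∑ t : Fin n → G, if (u⁻¹ * t) ∈ S then (1 : ℂ) else 0)
      = (Nat.card S : ℂ) := by
  rw [Fintype.sum_equiv (Equiv.mulLeft u⁻¹)
    (fun t => if (u⁻¹ * t) ∈ S then (1 : ℂ) else 0)
    (fun s => if s ∈ S then (1 : ℂ) else 0) (fun t => rfl)]
  rw [Finset.sum_boole]
  congr 1
  rw [Nat.card_eq_fintype_card, Fintype.card_subtype]

lemma tripleSum {β ζ : Type} [Fintype β] [Fintype ζ]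
    (p q : β → ℂ) (r s : β → ζ → ℂ) :
    ∑ z : ζ, (∑ t, p t * r t z) * (∑ u, q u * s u z)
      = ∑ t, ∑ u, (p t * q u) * ∑ z, r t z * s u z := by
  calc ∑ z : ζ, (∑ t, p t * r t z) * (∑ u, q u * s u z)
      = ∑ z : ζ, ∑ t, ∑ u, (p t * q u) * (r t z * s u z) := by
        refine Finset.sum_congr rfl fun z _ => ?_
        rw [Finset.sum_mul_sum]
        exact Finset.sum_congr rfl fun t _ =>
          Finset.sum_congr rfl fun u _ => by ring
    _ = ∑ t, ∑ z : ζ, ∑ u, (p t * q u) * (r t z * s u z) := Finset.sum_comm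
    _ = ∑ t, ∑ u, ∑ z : ζ, (p t * q u) * (r t z * s u z) :=
        Finset.sum_congr rfl fun t _ => Finset.sum_comm
    _ = ∑ t, ∑ u, (p t * q u) * ∑ z : ζ, r t z * s u z := by
        refine Finset.sum_congr rfl fun t _ => Finset.sum_congr rfl fun u _ => ?_
        rw [Finset.mul_sum]

lemma prod_univ_congr {α : Type} {M : Type} [CommMonoid M] {i1 i2 : Fintype α}
    (f : α → M) : (@Finset.univ α i1).prod f = (@Finset.univ α i2).prod f := by
  cases Subsingleton.elim i1 i2; rfl

lemma sum_univ_congr {α : Type} {M : Type} [AddCommMonoid M] {i1 i2 : Fintype α}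
    (f : α → M) : (@Finset.univ α i1).sum f = (@Finset.univ α i2).sum f := by
  cases Subsingleton.elim i1 i2; rfl

end Aux2


section Aux3

open Matrix

variable (O : (k : Fin m) → (Fin n → G) → Matrix (ι k) (ι k) ℂ)
  (φ : (k : Fin m) → ι k → ℂ)

/-- The amplitude of `O^t Φ` restricted to the parties in `A`. -/
def fA (A : Finset (Fin m)) (t : Fin n → G)
    (x : (k : { k : Fin m // k ∈ A }) → ι k.1) : ℂ :=
  fOn O φ (fun k => k ∈ A) t x

/-- The amplitude of `O^t Φ` restricted to the parties outside `A`. -/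
def fB (A : Finset (Fin m)) (t : Fin n → G)
    (x : (k : { k : Fin m // k ∉ A }) → ι k.1) : ℂ :=
  fOn O φ (fun k => k ∉ A) t x

lemma glue_prod (A : Finset (Fin m)) (t : Fin n → G)
    (xA : (k : { k : Fin m // k ∈ A }) → ι k.1)
    (zB : (k : { k : Fin m // k ∉ A }) → ι k.1) :
    actVec O φ t (glue A xA zB) = fA O φ A t xA * fB O φ A t zB := by
  simp only [fA, fB, fOn, actVec]
  rw [← Fintype.prod_subtype_mul_prod_subtype (fun k => k ∈ A)
    (fun k => ((O k t).mulVec (φ k)) (glue A xA zB k))]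
  congr 1
  · exact (prod_univ_congr _).trans
      (Finset.prod_congr rfl fun (k : { x : Fin m // x ∈ A }) _ =>
        congrArg (fun y => ((O k.1 t).mulVec (φ k.1)) y) (dif_pos k.2))
  · exact (prod_univ_congr _).trans
      (Finset.prod_congr rfl fun (k : { x : Fin m // x ∉ A }) _ =>
        congrArg (fun y => ((O k.1 t).mulVec (φ k.1)) y) (dif_neg k.2))

end Aux3

/-- Lemma, spectrum of reduced density operators: if 𝒢_Φ(B) ⊆ 𝒢_Φ(A)
for B = Aᶜ, then ρ_A² = (|𝒢_Φ(A)|·|𝒢_Φ(B)|/(|𝒢|·|𝒢_Φ|)) ρ_A; in particular every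
nonzero eigenvalue of ρ_A equals |𝒢_Φ(A)|·|𝒢_Φ(B)|/(|𝒢|·|𝒢_Φ|). -/
theorem reduced_density_flat_spectrum
    (O : (k : Fin m) → (Fin n → G) → Matrix (ι k) (ι k) ℂ) (hO : IsLocalRep O)
    (φ : (k : Fin m) → ι k → ℂ) (hφ : ∀ k, ∑ x : ι k, ‖φ k x‖ ^ 2 = 1)
    (horth : OrthCond O φ)
    (A : Finset (Fin m))
    (hsub : localStab O φ Aᶜ ⊆ localStab O φ A) :
    rhoA (Psi O φ) A * rhoA (Psi O φ) A =
      ((((Nat.card (localStab O φ A) : ℝ) * (Nat.card (localStab O φ Aᶜ) : ℝ)) /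
          (((Fintype.card G : ℝ) ^ n) * (Nat.card (globalStab O φ) : ℝ)) : ℝ) : ℂ) •
        rhoA (Psi O φ) A ∧
    ∀ μ : ℂ, μ ≠ 0 →
      Module.End.HasEigenvalue (Matrix.toLin' (rhoA (Psi O φ) A)) μ →
      μ = ((((Nat.card (localStab O φ A) : ℝ) * (Nat.card (localStab O φ Aᶜ) : ℝ)) /
          (((Fintype.card G : ℝ) ^ n) * (Nat.card (globalStab O φ) : ℝ)) : ℝ) : ℂ) := by
  classical
  set lam : ℂ := ((((Nat.card (localStab O φ A) : ℝ) * (Nat.card (localStab O φ Aᶜ) : ℝ)) /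
      (((Fintype.card G : ℝ) ^ n) * (Nat.card (globalStab O φ) : ℝ)) : ℝ) : ℂ) with hlam
  obtain ⟨C, hPsiC, hCsq⟩ : ∃ C : ℝ,
      (∀ x, Psi O φ x = (C : ℂ) * ∑ t : Fin n → G, actVec O φ t x) ∧
        C * C = (((Fintype.card G : ℝ)) ^ n * (Nat.card (globalStab O φ) : ℝ))⁻¹ := by
    refine ⟨(Real.sqrt ((Fintype.card G) ^ n * Nat.card (globalStab O φ)))⁻¹,
      fun x => rfl, ?_⟩
    rw [← mul_inv, Real.mul_self_sqrt (by positivity)]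
  have hPsi : ∀ (xA : (k : { k : Fin m // k ∈ A }) → ι k.1)
      (zB : (k : { k : Fin m // k ∉ A }) → ι k.1),
      Psi O φ (glue A xA zB) = (C : ℂ) * ∑ t, fA O φ A t xA * fB O φ A t zB := by
    intro xA zB
    rw [hPsiC]
    exact congrArg (HMul.hMul _)
      (Finset.sum_congr rfl fun t _ => glue_prod O φ A t xA zB)
  have hovB : ∀ t u : Fin n → G,
      (∑ z : (k : { k : Fin m // k ∉ A }) → ι k.1,
        fB O φ A t z * (starRingEnd ℂ) (fB O φ A u z))
        = if (u⁻¹ * t) ∈ localStab O φ Aᶜ then 1 else 0 :=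
    fun t u => (sum_univ_congr _).trans
      (fOn_overlap O φ hO hφ horth (fun k => k ∉ A) Aᶜ
        (fun k => (Finset.mem_compl).symm) t u)
  have hovA : ∀ t u : Fin n → G,
      (∑ w : (k : { k : Fin m // k ∈ A }) → ι k.1,
        fA O φ A t w * (starRingEnd ℂ) (fA O φ A u w))
        = if (u⁻¹ * t) ∈ localStab O φ A then 1 else 0 :=
    fun t u => (sum_univ_congr _).trans
      (fOn_overlap O φ hO hφ horth (fun k => k ∈ A) A (fun k => Iff.rfl) t u)
  have hinvA : ∀ t u : Fin n → G, (u⁻¹ * t) ∈ localStab O φ A →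
      fA O φ A t = fA O φ A u :=
    fun t u h => fOn_inv O φ hO hφ horth _ A (fun k hk => hk) t u h
  -- entrywise formula for the reduced density operator
  have hrho : ∀ xA yA, rhoA (Psi O φ) A xA yA
      = ((C : ℂ) * C * (Nat.card (localStab O φ Aᶜ) : ℂ)) *
          ∑ u, fA O φ A u xA * (starRingEnd ℂ) (fA O φ A u yA) := by
    intro xA yA
    have e1 : rhoA (Psi O φ) A xA yA
        = ∑ zB : (k : { k : Fin m // k ∉ A }) → ι k.1,
            ((C : ℂ) * ∑ t, fA O φ A t xA * fB O φ A t zB) *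
              (starRingEnd ℂ) ((C : ℂ) * ∑ u, fA O φ A u yA * fB O φ A u zB) := by
      simp only [rhoA, Matrix.of_apply]
      exact Finset.sum_congr rfl fun z _ => by rw [hPsi xA z, hPsi yA z]
    have e2 : ∀ zB, ((C : ℂ) * ∑ t, fA O φ A t xA * fB O φ A t zB) *
        (starRingEnd ℂ) ((C : ℂ) * ∑ u, fA O φ A u yA * fB O φ A u zB)
        = ((C : ℂ) * C) * ((∑ t, fA O φ A t xA * fB O φ A t zB) *
            (∑ u, (starRingEnd ℂ) (fA O φ A u yA) * (starRingEnd ℂ) (fB O φ A u zB))) := by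
      intro zB
      rw [_root_.map_mul, map_sum, Complex.conj_ofReal]
      simp only [_root_.map_mul]
      ring
    rw [e1, Finset.sum_congr rfl fun z _ => e2 z, ← Finset.mul_sum,
      tripleSum (fun t => fA O φ A t xA) (fun u => (starRingEnd ℂ) (fA O φ A u yA))
        (fun t z => fB O φ A t z) (fun u z => (starRingEnd ℂ) (fB O φ A u z))]
    rw [Finset.sum_comm]
    have e4 : ∀ u : Fin n → G,
        (∑ t, (fA O φ A t xA * (starRingEnd ℂ) (fA O φ A u yA)) *
            ∑ z, fB O φ A t z * (starRingEnd ℂ) (fB O φ A u z))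
          = (Nat.card (localStab O φ Aᶜ) : ℂ) *
              (fA O φ A u xA * (starRingEnd ℂ) (fA O φ A u yA)) := by
      intro u
      have e5 : ∀ t, (fA O φ A t xA * (starRingEnd ℂ) (fA O φ A u yA)) *
          (∑ z, fB O φ A t z * (starRingEnd ℂ) (fB O φ A u z))
          = (if (u⁻¹ * t) ∈ localStab O φ Aᶜ then (1 : ℂ) else 0) *
              (fA O φ A u xA * (starRingEnd ℂ) (fA O φ A u yA)) := by
        intro t
        rw [hovB t u]
        by_cases h : (u⁻¹ * t) ∈ localStab O φ Aᶜ
        · rw [hinvA t u (hsub h)]; simp [h]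
        · simp [h]
      rw [Finset.sum_congr rfl fun t _ => e5 t, ← Finset.sum_mul, count_stab]
    rw [Finset.sum_congr rfl fun u _ => e4 u, ← Finset.mul_sum]
    ring
  set NM : Matrix ((k : { k : Fin m // k ∈ A }) → ι k.1)
      ((k : { k : Fin m // k ∈ A }) → ι k.1) ℂ :=
    Matrix.of (fun x y => ∑ u, fA O φ A u x * (starRingEnd ℂ) (fA O φ A u y)) with hNM
  set d : ℂ := (C : ℂ) * C * (Nat.card (localStab O φ Aᶜ) : ℂ) with hd
  have hrhoM : rhoA (Psi O φ) A = d • NM := by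
    ext x y
    rw [Matrix.smul_apply, hNM, Matrix.of_apply, smul_eq_mul, hd]
    exact hrho x y
  have hNN : NM * NM = ((Nat.card (localStab O φ A) : ℂ)) • NM := by
    ext x y
    rw [Matrix.mul_apply]
    calc ∑ w, NM x w * NM w y
        = ∑ w, (∑ t, fA O φ A t x * (starRingEnd ℂ) (fA O φ A t w)) *
            (∑ s, (starRingEnd ℂ) (fA O φ A s y) * fA O φ A s w) := by
          refine Finset.sum_congr rfl fun w _ => ?_
          rw [hNM]
          simp only [Matrix.of_apply]
          congr 1
          exact Finset.sum_congr rfl fun s _ => mul_comm _ _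
      _ = ∑ t, ∑ s, (fA O φ A t x * (starRingEnd ℂ) (fA O φ A s y)) *
            ∑ w, (starRingEnd ℂ) (fA O φ A t w) * fA O φ A s w :=
          tripleSum (fun t => fA O φ A t x) (fun s => (starRingEnd ℂ) (fA O φ A s y))
            (fun t w => (starRingEnd ℂ) (fA O φ A t w)) (fun s w => fA O φ A s w)
      _ = ∑ t, ∑ s, (fA O φ A t x * (starRingEnd ℂ) (fA O φ A s y)) *
            (if (t⁻¹ * s) ∈ localStab O φ A then (1 : ℂ) else 0) := by
          refine Finset.sum_congr rfl fun t _ => Finset.sum_congr rfl fun s _ => ?_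
          congr 1
          have h2 := congrArg (starRingEnd ℂ) (hovA t s)
          simp only [map_sum, _root_.map_mul, Complex.conj_conj] at h2
          rw [apply_ite (starRingEnd ℂ), map_one, map_zero] at h2
          rw [h2, if_congr (stab_symm O φ hO hφ horth A t s) rfl rfl]
      _ = ∑ t, (Nat.card (localStab O φ A) : ℂ) *
            (fA O φ A t x * (starRingEnd ℂ) (fA O φ A t y)) := by
          refine Finset.sum_congr rfl fun t _ => ?_
          have e6 : ∀ s, (fA O φ A t x * (starRingEnd ℂ) (fA O φ A s y)) *
              (if (t⁻¹ * s) ∈ localStab O φ A then (1 : ℂ) else 0)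
              = (if (t⁻¹ * s) ∈ localStab O φ A then (1 : ℂ) else 0) *
                  (fA O φ A t x * (starRingEnd ℂ) (fA O φ A t y)) := by
            intro s
            by_cases h : (t⁻¹ * s) ∈ localStab O φ A
            · rw [hinvA s t h]; simp [h]
            · simp [h]
          rw [Finset.sum_congr rfl fun s _ => e6 s, ← Finset.sum_mul, count_stab]
      _ = (Nat.card (localStab O φ A) : ℂ) *
            ∑ t, fA O φ A t x * (starRingEnd ℂ) (fA O φ A t y) := by
          rw [← Finset.mul_sum]
      _ = (((Nat.card (localStab O φ A) : ℂ)) • NM) x y := by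
          rw [Matrix.smul_apply, hNM, Matrix.of_apply, smul_eq_mul]
  have hscal : d * d * (Nat.card (localStab O φ A) : ℂ) = lam * d := by
    have hr : ((C : ℂ) * C)
        = (((((Fintype.card G : ℝ)) ^ n * (Nat.card (globalStab O φ) : ℝ))⁻¹ : ℝ) : ℂ) := by
      rw [← Complex.ofReal_mul, hCsq]
    rw [hd, hlam, hr]
    push_cast
    rw [div_eq_mul_inv]
    ring
  have hmain : rhoA (Psi O φ) A * rhoA (Psi O φ) A = lam • rhoA (Psi O φ) A := by
    rw [hrhoM]
    calc (d • NM) * (d • NM) = (d * d) • (NM * NM) := by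
          rw [Matrix.smul_mul, Matrix.mul_smul, smul_smul]
      _ = (d * d * (Nat.card (localStab O φ A) : ℂ)) • NM := by
          rw [hNN, smul_smul]
      _ = (lam * d) • NM := by rw [hscal]
      _ = lam • (d • NM) := (smul_smul lam d NM).symm
  refine ⟨hmain, ?_⟩
  intro μ hμ hev
  obtain ⟨v, hv⟩ := Module.End.HasEigenvalue.exists_hasEigenvector hev
  have hv1 : Matrix.toLin' (rhoA (Psi O φ) A) v = μ • v := hv.apply_eq_smul
  have h1 : Matrix.toLin' (rhoA (Psi O φ) A * rhoA (Psi O φ) A) v = (μ * μ) • v := by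
    rw [Matrix.toLin'_mul, LinearMap.comp_apply, hv1, map_smul, hv1, smul_smul]
  have h2 : Matrix.toLin' (rhoA (Psi O φ) A * rhoA (Psi O φ) A) v = (lam * μ) • v := by
    rw [hmain, map_smul, LinearMap.smul_apply, hv1, smul_smul]
  have h4 : μ * μ = lam * μ := smul_left_injective ℂ hv.right (h1.symm.trans h2)
  exact mul_right_cancel₀ hμ h4

end GenForm
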